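/- Let p be an odd prime, let l be an integer with l ≥ 2, let K = ZMod p, and let V = Fin l → K with standard basis e₁, …, e_l. In the (l+1)-fold tensor power V^{⊗(l+1)} over K, define for each 1 ≤ i ≤ l and 1 ≤ j ≤ l+1 the vector w_{i,j} := Σ_{τ ∈ S_l} sgn(τ) · e_{τ(1)} ⊗ ⋯ ⊗ e_{τ(j−1)} ⊗ e_i ⊗ e_{τ(j)} ⊗ ⋯ ⊗ e_{τ(l)} (the antisymmetrization of e₁ ⊗ ⋯ ⊗ e_l with an extra factor e_i inserted in the j-th tensor slot, the sum running over all permutations τ of {1, …, l}). Then for scalars c_{i,j} ∈ K (1 ≤ i ≤ l, 1 ≤ j ≤ l+1), the relation Σ_{i=1}^{l} Σ_{j=1}^{l+1} c_{i,j} · w_{i,j} = 0 holds in V^{⊗(l+1)} if and only if c_{i,j} = (−1)^{j−1} · c_{i,1} for all i and j, i.e., c_{i,1} = −c_{i,2} = c_{i,3} = ⋯ = (−1)^{l} c_{i,l+1} for each i. -/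

import Mathlib

open scoped TensorProduct

/-- The generator `w i j`: the antisymmetrization of `e₁ ⊗ ⋯ ⊗ e_l` with an
extra factor `e i` inserted in the `j`-th tensor slot, in the `(l+1)`-fold
tensor power of `Fin l → ZMod p` over `ZMod p`. -/
noncomputable def insertedAntisymmetrizer (p l : ℕ) (i : Fin l) (j : Fin (l + 1)) :
    ⨂[ZMod p] (_ : Fin (l + 1)), (Fin l → ZMod p) :=
  ∑ τ : Equiv.Perm (Fin l),
    (((Equiv.Perm.sign τ : ℤ) : ZMod p)) •
      PiTensorProduct.tprod (ZMod p)
        (j.succAboveCases (Pi.single i (1 : ZMod p))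
          (fun s : Fin l => Pi.single (τ s) (1 : ZMod p)))

/-- The coefficient functional extracting the coordinate of the basis tensor
indexed by `f`. -/
noncomputable def coeffFun (p l : ℕ) (f : Fin (l + 1) → Fin l) :
    (⨂[ZMod p] (_ : Fin (l + 1)), (Fin l → ZMod p)) →ₗ[ZMod p] ZMod p :=
  PiTensorProduct.lift
    ((MultilinearMap.mkPiAlgebra (ZMod p) (Fin (l + 1)) (ZMod p)).compLinearMap
      fun k => LinearMap.proj (f k))

lemma coeffFun_tprod (p l : ℕ) (f : Fin (l + 1) → Fin l)
    (v : Fin (l + 1) → (Fin l → ZMod p)) :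
    coeffFun p l f (PiTensorProduct.tprod (ZMod p) v) = ∏ k, v k (f k) := by
  simp [coeffFun]

lemma coeff_w (p l : ℕ) (f : Fin (l + 1) → Fin l) (i : Fin l) (j : Fin (l + 1)) :
    coeffFun p l f (insertedAntisymmetrizer p l i j) =
      ∑ τ : Equiv.Perm (Fin l), ((Equiv.Perm.sign τ : ℤ) : ZMod p) *
        ((if f j = i then 1 else 0) *
          if ∀ s, f (j.succAbove s) = τ s then 1 else 0) := by
  simp only [insertedAntisymmetrizer, map_sum, map_smul, coeffFun_tprod, smul_eq_mul,
    Fin.succAbove_cases_eq_insertNth]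
  refine Finset.sum_congr rfl fun τ _ => ?_
  congr 1
  rw [Fin.prod_univ_succAbove _ j]
  simp only [Fin.insertNth_apply_same, Fin.insertNth_apply_succAbove, Pi.single_apply]
  rw [Fintype.prod_boole]
  congr 1
  convert rfl using 2

lemma coeff_w_of (p l : ℕ) (f : Fin (l + 1) → Fin l) (i : Fin l) (j : Fin (l + 1))
    (τ : Equiv.Perm (Fin l)) (h1 : f j = i) (h2 : ∀ s, f (j.succAbove s) = τ s) :
    coeffFun p l f (insertedAntisymmetrizer p l i j) = ((Equiv.Perm.sign τ : ℤ) : ZMod p) := by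
  rw [coeff_w]
  rw [Finset.sum_eq_single τ]
  · rw [if_pos h1, if_pos h2, mul_one, mul_one]
  · intro τ' _ hne
    have hz : (if ∀ s, f (j.succAbove s) = τ' s then (1 : ZMod p) else 0) = 0 :=
      if_neg fun h' => hne (Equiv.ext fun s => by rw [← h' s, h2 s])
    rw [hz, mul_zero, mul_zero]
  · simp

lemma coeff_w_zero_left (p l : ℕ) (f : Fin (l + 1) → Fin l) (i : Fin l) (j : Fin (l + 1))
    (h : f j ≠ i) :
    coeffFun p l f (insertedAntisymmetrizer p l i j) = 0 := by
  rw [coeff_w]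
  refine Finset.sum_eq_zero fun τ _ => ?_
  rw [if_neg h, zero_mul, mul_zero]

lemma coeff_w_zero_noninj (p l : ℕ) (f : Fin (l + 1) → Fin l) (i : Fin l) (j : Fin (l + 1))
    (h : ¬ Function.Injective fun s => f (j.succAbove s)) :
    coeffFun p l f (insertedAntisymmetrizer p l i j) = 0 := by
  rw [coeff_w]
  refine Finset.sum_eq_zero fun τ _ => ?_
  have hz : (if ∀ s, f (j.succAbove s) = τ s then (1 : ZMod p) else 0) = 0 :=
    if_neg fun h' => h fun a b hab => τ.injective (by rw [← h' a, ← h' b]; exact hab)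
  rw [hz, mul_zero, mul_zero]

lemma adjacent_step (p l : ℕ) (c : Fin l → Fin (l + 1) → ZMod p)
    (hsum : ∑ i : Fin l, ∑ j : Fin (l + 1), c i j • insertedAntisymmetrizer p l i j = 0)
    (i j : Fin l) : c i j.succ = - c i j.castSucc := by
  set f : Fin (l + 1) → Fin l :=
    Fin.insertNth (α := fun _ => Fin l) j.castSucc i (fun s => Equiv.swap i j s) with hf
  have hf1 : f j.castSucc = i := Fin.insertNth_apply_same _ _ _
  have hf2 : ∀ s, f (j.castSucc.succAbove s) = Equiv.swap i j s := fun s =>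
    Fin.insertNth_apply_succAbove _ _ _ _
  have hf3 : f j.succ = i := by
    rw [← Fin.succAbove_castSucc_self j, hf2 j, Equiv.swap_apply_right]
  have hf4 : ∀ s, f (j.succ.succAbove s) = Equiv.swap i j s := by
    intro s
    rcases lt_trichotomy s j with h | rfl | h
    · have e1 : j.succ.succAbove s = j.castSucc.succAbove s := by
        rw [Fin.succAbove_of_castSucc_lt _ _ (Fin.castSucc_lt_succ_iff.mpr h.le),
          Fin.succAbove_of_castSucc_lt _ _ (Fin.castSucc_lt_castSucc_iff.mpr h)]
      rw [e1, hf2]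
    · rw [Fin.succAbove_succ_self, hf1, Equiv.swap_apply_right]
    · have e1 : j.succ.succAbove s = j.castSucc.succAbove s := by
        rw [Fin.succAbove_of_le_castSucc _ _ (Fin.succ_le_castSucc_iff.mpr h),
          Fin.succAbove_of_le_castSucc _ _ (Fin.castSucc_le_castSucc_iff.mpr h.le)]
      rw [e1, hf2]
  have h0 := congrArg (coeffFun p l f) hsum
  simp only [map_sum, map_smul, map_zero, smul_eq_mul] at h0
  rw [← Finset.sum_product', Finset.univ_product_univ] at h0
  have hzero : ∀ x ∈ (Finset.univ : Finset (Fin l × Fin (l + 1))),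
      x ∉ ({(i, j.castSucc), (i, j.succ)} : Finset (Fin l × Fin (l + 1))) →
      c x.1 x.2 * coeffFun p l f (insertedAntisymmetrizer p l x.1 x.2) = 0 := by
    rintro ⟨i', j'⟩ _ hx
    simp only [Finset.mem_insert, Finset.mem_singleton, Prod.mk.injEq, not_or, not_and] at hx
    by_cases hfi : f j' = i'
    · have hj1 : j.castSucc ≠ j' := by
        intro h; exact hx.1 (by rw [← hfi, ← h, hf1]) h.symm
      have hj2 : j.succ ≠ j' := by
        intro h; exact hx.2 (by rw [← hfi, ← h, hf3]) h.symm
      obtain ⟨a, ha⟩ := Fin.exists_succAbove_eq hj1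
      obtain ⟨b, hb⟩ := Fin.exists_succAbove_eq hj2
      have hab : a ≠ b := fun h => (Fin.castSucc_lt_succ : j.castSucc < j.succ).ne (by rw [← ha, ← hb, h])
      rw [coeff_w_zero_noninj p l f i' j' (fun hinj => hab (hinj (by
        show f (j'.succAbove a) = f (j'.succAbove b)
        rw [ha, hb, hf1, hf3]))), mul_zero]
    · rw [coeff_w_zero_left p l f i' j' hfi, mul_zero]
  rw [← Finset.sum_subset (Finset.subset_univ _) hzero] at h0
  have hne : ((i, j.castSucc) : Fin l × Fin (l + 1)) ≠ (i, j.succ) :=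
    fun h => (Fin.castSucc_lt_succ : j.castSucc < j.succ).ne (congrArg Prod.snd h)
  rw [Finset.sum_pair hne] at h0
  rw [coeff_w_of p l f i j.castSucc (Equiv.swap i j) hf1 hf2,
    coeff_w_of p l f i j.succ (Equiv.swap i j) hf3 hf4] at h0
  set S : ZMod p := ((Equiv.Perm.sign (Equiv.swap i j) : ℤ) : ZMod p) with hSdef
  have hSS : S * S = 1 := by
    rw [hSdef, ← Int.cast_mul, ← Units.val_mul, Int.units_mul_self, Units.val_one,
      Int.cast_one]
  linear_combination S * h0 - (c i j.castSucc + c i j.succ) * hSS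

lemma alt_sum_zero (p l : ℕ) (hp : p.Prime) (hodd : Odd p) (i : Fin l) :
    ∑ j : Fin (l + 1), ((-1 : ZMod p) ^ (j : ℕ)) • insertedAntisymmetrizer p l i j = 0 := by
  haveI : Fact p.Prime := ⟨hp⟩
  set g : Fin (l + 1) → Fin l := Fin.cases i (fun s => s) with hg
  set F : Equiv.Perm (Fin (l + 1)) → (⨂[ZMod p] (_ : Fin (l + 1)), (Fin l → ZMod p)) :=
    fun σ => ((Equiv.Perm.sign σ : ℤ) : ZMod p) •
      PiTensorProduct.tprod (ZMod p) (fun k => Pi.single (g (σ k)) (1 : ZMod p)) with hF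
  set φ : Fin (l + 1) × Equiv.Perm (Fin l) → Equiv.Perm (Fin (l + 1)) :=
    fun x => Equiv.Perm.decomposeFin.symm (0, x.2) * x.1.cycleRange with hφ
  have hApp : ∀ (j : Fin (l + 1)) (τ : Equiv.Perm (Fin l)), φ (j, τ) j = 0 := by
    intro j τ
    simp [hφ, Equiv.Perm.mul_apply, Fin.cycleRange_self,
      Equiv.Perm.decomposeFin_symm_apply_zero]
  have hb : Function.Bijective φ := by
    rw [Fintype.bijective_iff_injective_and_card]
    constructor
    · rintro ⟨j, τ⟩ ⟨j', τ'⟩ h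
      have hjj : j = j' := by
        have h1 := hApp j τ
        rw [h] at h1
        exact (φ (j', τ')).injective (h1.trans (hApp j' τ').symm)
      subst hjj
      have h2 := mul_right_cancel (h : _ * j.cycleRange = _ * j.cycleRange)
      have h3 := Equiv.Perm.decomposeFin.symm.injective h2
      simp only [Prod.mk.injEq] at h3
      exact Prod.ext rfl h3.2
    · simp [Fintype.card_perm, Nat.factorial_succ]
  have key : ∑ j : Fin (l + 1), ((-1 : ZMod p) ^ (j : ℕ)) • insertedAntisymmetrizer p l i j
      = ∑ σ : Equiv.Perm (Fin (l + 1)), F σ := by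
    rw [← Fintype.sum_bijective φ hb _ F (fun x => rfl), Fintype.sum_prod_type]
    refine Finset.sum_congr rfl fun j _ => ?_
    rw [insertedAntisymmetrizer, Finset.smul_sum]
    refine Finset.sum_congr rfl fun τ _ => ?_
    have hsign : Equiv.Perm.sign (φ (j, τ)) = (-1) ^ (j : ℕ) * Equiv.Perm.sign τ := by
      rw [hφ]
      simp only [Equiv.Perm.sign_mul, Equiv.Perm.decomposeFin.symm_sign, if_pos rfl,
        if_true, one_mul, Fin.sign_cycleRange]
      rw [mul_comm]
    have htuple : (fun k => (Pi.single (g (φ (j, τ) k)) (1 : ZMod p) : Fin l → ZMod p)) =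
        j.succAboveCases (α := fun _ => Fin l → ZMod p) (Pi.single i 1)
          (fun s => Pi.single (τ s) 1) := by
      funext k
      rw [Fin.succAbove_cases_eq_insertNth]
      by_cases hk : k = j
      · subst hk
        rw [Fin.insertNth_apply_same]
        have : φ (k, τ) k = 0 := hApp k τ
        rw [this, hg]
        simp
      · obtain ⟨s, rfl⟩ := Fin.exists_succAbove_eq hk
        rw [Fin.insertNth_apply_succAbove]
        have : φ (j, τ) (j.succAbove s) = Fin.succ (τ s) := by
          simp [hφ, Equiv.Perm.mul_apply, Fin.cycleRange_succAbove,
            Equiv.Perm.decomposeFin_symm_apply_succ]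
        rw [this, hg]
        simp
    rw [hF]
    simp only
    rw [hsign, htuple, smul_smul]
    congr 1
    push_cast [Units.val_mul, Units.val_pow_eq_pow_val]
    ring
  rw [key]
  have hswap : ∀ x, g (Equiv.swap 0 (Fin.succ i) x) = g x := by
    intro x
    rcases eq_or_ne x 0 with rfl | h0
    · rw [Equiv.swap_apply_left, hg]; simp
    rcases eq_or_ne x (Fin.succ i) with rfl | h1
    · rw [Equiv.swap_apply_right, hg]; simp
    · rw [Equiv.swap_apply_of_ne_of_ne h0 h1]
  have hFswap : ∀ σ, F (Equiv.swap 0 (Fin.succ i) * σ) = - F σ := by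
    intro σ
    have hs : Equiv.Perm.sign (Equiv.swap 0 (Fin.succ i) * σ) = - Equiv.Perm.sign σ := by
      rw [Equiv.Perm.sign_mul, Equiv.Perm.sign_swap (Fin.succ_ne_zero i).symm, neg_one_mul]
    rw [hF]
    simp only
    rw [hs]
    have ht : (fun k => (Pi.single (g ((Equiv.swap 0 (Fin.succ i) * σ) k)) (1 : ZMod p) :
          Fin l → ZMod p)) =
        fun k => (Pi.single (g (σ k)) (1 : ZMod p) : Fin l → ZMod p) := by
      funext k
      rw [Equiv.Perm.mul_apply, hswap]
    rw [ht]
    rw [Units.val_neg, Int.cast_neg]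
    exact neg_smul (R := ZMod p)
      (M := ⨂[ZMod p] (_ : Fin (l + 1)), (Fin l → ZMod p)) _ _
  have hA : ∑ σ : Equiv.Perm (Fin (l + 1)), F σ = - ∑ σ : Equiv.Perm (Fin (l + 1)), F σ := by
    calc ∑ σ : Equiv.Perm (Fin (l + 1)), F σ
        = ∑ σ : Equiv.Perm (Fin (l + 1)), F (Equiv.swap 0 (Fin.succ i) * σ) :=
          (Fintype.sum_bijective _ (Group.mulLeft_bijective _) _ _ fun _ => rfl).symm
      _ = ∑ σ : Equiv.Perm (Fin (l + 1)), - F σ := by simp only [hFswap]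
      _ = - ∑ σ : Equiv.Perm (Fin (l + 1)), F σ := by rw [Finset.sum_neg_distrib]
  have h2 : (2 : ZMod p) • (∑ σ : Equiv.Perm (Fin (l + 1)), F σ) = 0 := by
    rw [eq_neg_iff_add_eq_zero] at hA
    rw [two_smul]
    exact hA
  have h2ne : (2 : ZMod p) ≠ 0 := by
    intro h
    have h2' : ((2 : ℕ) : ZMod p) = 0 := by exact_mod_cast h
    rw [ZMod.natCast_eq_zero_iff] at h2'
    have := (Nat.prime_dvd_prime_iff_eq hp Nat.prime_two).mp h2'
    rw [this] at hodd
    exact (Nat.not_odd_iff_even.mpr (by decide)) hodd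
  calc ∑ σ : Equiv.Perm (Fin (l + 1)), F σ
      = ((2 : ZMod p)⁻¹ * 2) • ∑ σ : Equiv.Perm (Fin (l + 1)), F σ := by
        rw [inv_mul_cancel₀ h2ne, one_smul]
    _ = (2 : ZMod p)⁻¹ • ((2 : ZMod p) • ∑ σ : Equiv.Perm (Fin (l + 1)), F σ) := mul_smul _ _ _
    _ = 0 := by rw [h2, smul_zero]

/-- Lemma 5.1 (even-degree case): a linear relation
`∑_{i,j} c i j • w i j = 0` among the vectors `w i j` holds iff
`c i j = (-1)^j · c i 0` for all `i, j` (0-indexed slots), i.e.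
`c_{i,1} = -c_{i,2} = c_{i,3} = ⋯ = (-1)^l c_{i,l+1}` for each `i`. -/
theorem linear_relation_iff_alternating (p : ℕ) (hp : p.Prime) (hodd : Odd p)
    (l : ℕ) (hl : 2 ≤ l)
    (c : Fin l → Fin (l + 1) → ZMod p) :
    (∑ i : Fin l, ∑ j : Fin (l + 1), c i j • insertedAntisymmetrizer p l i j = 0) ↔
      ∀ (i : Fin l) (j : Fin (l + 1)), c i j = (-1) ^ (j : ℕ) * c i 0 := by
  constructor
  · intro hsum i j
    induction j using Fin.induction with
    | zero => simp
    | succ j ih =>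
      rw [adjacent_step p l c hsum i j, ih, Fin.coe_castSucc, Fin.val_succ, pow_succ]
      ring
  · intro hc
    have key : ∀ i : Fin l, ∑ j : Fin (l + 1), c i j • insertedAntisymmetrizer p l i j
        = c i 0 • ∑ j : Fin (l + 1),
            ((-1 : ZMod p) ^ (j : ℕ)) • insertedAntisymmetrizer p l i j := by
      intro i
      rw [Finset.smul_sum]
      refine Finset.sum_congr rfl fun j _ => ?_
      rw [hc i j, mul_comm, mul_smul]
    calc ∑ i : Fin l, ∑ j : Fin (l + 1), c i j • insertedAntisymmetrizer p l i j
        = ∑ i : Fin l, c i 0 • ∑ j : Fin (l + 1),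
            ((-1 : ZMod p) ^ (j : ℕ)) • insertedAntisymmetrizer p l i j :=
          Finset.sum_congr rfl fun i _ => key i
      _ = 0 := by
          simp [alt_sum_zero p l hp hodd]
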